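/- For any two decomposed objects X and Y, the mutual BDM satisfies the inclusion–exclusion identity MutualBDM(X,Y) = BDM(X) + BDM(Y) − JointBDM(X,Y). -/
import Mathlib

open Finsupp

/-- The multiplicity correction term: `f n m = 0` if `n = m`, else `log n`. -/
noncomputable def bdmF (n m : ℕ) : ℝ := if n = m then 0 else Real.log n

/-- The (unconditional) BDM of a decomposed object given by its multiplicity function. -/
noncomputable def BDM {R : Type*} (CTM : R → ℝ) (X : R →₀ ℕ) : ℝ :=
  ∑ r ∈ X.support, (CTM r + Real.log (X r))

/-- The coarse conditional BDM of `X` given `Y`. -/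
noncomputable def condBDM {R : Type*} [DecidableEq R] (CTM : R → ℝ) (X Y : R →₀ ℕ) : ℝ :=
  ∑ r ∈ X.support \ Y.support, (CTM r + Real.log (X r)) +
  ∑ r ∈ X.support ∩ Y.support, bdmF (X r) (Y r)


/-- The mutual BDM of `X` and `Y`: `MutualBDM(X,Y) = BDM(X) − BDM(X|Y)`. -/
noncomputable def mutualBDM {R : Type*} [DecidableEq R] (CTM : R → ℝ) (X Y : R →₀ ℕ) : ℝ :=
  BDM CTM X - condBDM CTM X Y

/-- The joint BDM of `X` and `Y`: `JointBDM(X,Y) = BDM(Y|X) + BDM(X)`. -/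
noncomputable def jointBDM {R : Type*} [DecidableEq R] (CTM : R → ℝ) (X Y : R →₀ ℕ) : ℝ :=
  condBDM CTM Y X + BDM CTM X

lemma bdm_split {R : Type*} [DecidableEq R] (CTM : R → ℝ) (X Y : R →₀ ℕ) :
    BDM CTM X = ∑ r ∈ X.support \ Y.support, (CTM r + Real.log (X r)) +
      ∑ r ∈ X.support ∩ Y.support, (CTM r + Real.log (X r)) := by
  rw [BDM, ← Finset.sum_union (Finset.disjoint_sdiff_inter _ _),
    Finset.sdiff_union_inter]

/-- Inclusion–exclusion: `MutualBDM(X,Y) = BDM(X) + BDM(Y) − JointBDM(X,Y)`. -/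
theorem mutualBDM_eq_add_sub_joint {R : Type*} [DecidableEq R] (CTM : R → ℝ)
    (X Y : R →₀ ℕ) :
    mutualBDM CTM X Y = BDM CTM X + BDM CTM Y - jointBDM CTM X Y := by
  have key : ∑ r ∈ X.support ∩ Y.support, (CTM r + Real.log (X r) - bdmF (X r) (Y r)) =
      ∑ r ∈ Y.support ∩ X.support, (CTM r + Real.log (Y r) - bdmF (Y r) (X r)) := by
    rw [Finset.inter_comm]
    refine Finset.sum_congr rfl fun r _ => ?_
    unfold bdmF
    by_cases h : X r = Y r
    · simp [h]
    · rw [if_neg h, if_neg (Ne.symm h)]; ring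
  rw [mutualBDM, jointBDM, condBDM, condBDM, bdm_split CTM X Y, bdm_split CTM Y X]
  rw [Finset.sum_sub_distrib, Finset.sum_sub_distrib] at key
  linarith [key]
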